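/- Let a(z) = 1 + Σ_{k≥1} a_k z^{-(r+1)k} be the formal solution of S_z^r a = (−z)^r a. Then for each n ≥ 0, the leading term of S_z^n a(z) is (−1)^n z^n; that is, S_z^n a(z) = (−1)^n z^n + (lower-order terms supported on exponents ≡ n mod (r+1)). -/
import Mathlib


open HahnSeries Pointwise

/-- The operator `S_z = z^{1-r} ∂_z - (r-1)/(2 z^r) - z` acting on formal Laurent
series with finitely many positive powers of `z`, written in the variable
`t = z⁻¹` (so `coeff m` is the coefficient of `z^{-m}`). -/
noncomputable def Sop (r : ℕ) (f : LaurentSeries ℂ) : LaurentSeries ℂ where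
  coeff m := ((r + 1 : ℂ) / 2 - m) * f.coeff (m - r) - f.coeff (m + 1)
  isPWO_support' := by
    have h : (Function.support fun m : ℤ =>
        ((r + 1 : ℂ) / 2 - m) * f.coeff (m - r) - f.coeff (m + 1))
        ⊆ (f.support + {(r : ℤ)}) ∪ (f.support + ({(-1 : ℤ)} : Set ℤ)) := by
      intro m hm
      simp only [Function.mem_support] at hm
      by_cases h1 : f.coeff (m - (r : ℤ)) = 0
      · have h2 : f.coeff (m + 1) ≠ 0 := fun h2 => hm (by rw [h1, h2]; ring)
        right
        exact Set.mem_add.mpr ⟨m + 1, by simpa using h2, -1, rfl, by ring⟩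
      · left
        exact Set.mem_add.mpr ⟨m - r, by simpa using h1, r, rfl, by ring⟩
    exact ((f.isPWO_support.add (Set.isPWO_singleton (r : ℤ))).union
      (f.isPWO_support.add (Set.isPWO_singleton (-1 : ℤ)))).mono h

/-- The formal adjoint `S_z^⋆ = -z^{1-r} ∂_z + (r-1)/(2 z^r) - z`. -/
noncomputable def Sstar (r : ℕ) (f : LaurentSeries ℂ) : LaurentSeries ℂ where
  coeff m := ((m : ℂ) - (r + 1) / 2) * f.coeff (m - r) - f.coeff (m + 1)
  isPWO_support' := by
    have h : (Function.support fun m : ℤ =>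
        ((m : ℂ) - (r + 1) / 2) * f.coeff (m - r) - f.coeff (m + 1))
        ⊆ (f.support + {(r : ℤ)}) ∪ (f.support + ({(-1 : ℤ)} : Set ℤ)) := by
      intro m hm
      simp only [Function.mem_support] at hm
      by_cases h1 : f.coeff (m - (r : ℤ)) = 0
      · have h2 : f.coeff (m + 1) ≠ 0 := fun h2 => hm (by rw [h1, h2]; ring)
        right
        exact Set.mem_add.mpr ⟨m + 1, by simpa using h2, -1, rfl, by ring⟩
      · left
        exact Set.mem_add.mpr ⟨m - r, by simpa using h1, r, rfl, by ring⟩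
    exact ((f.isPWO_support.add (Set.isPWO_singleton (r : ℤ))).union
      (f.isPWO_support.add (Set.isPWO_singleton (-1 : ℤ)))).mono h

/-- Substitution `z ↦ ω z` on a formal Laurent series (`coeff m` is the
coefficient of `z^{-m}`, which gets multiplied by `ω^{-m}`). -/
noncomputable def rot (ω : ℂ) (f : LaurentSeries ℂ) : LaurentSeries ℂ where
  coeff m := ω ^ (-m) * f.coeff m
  isPWO_support' := f.isPWO_support.mono (fun m hm => by
    simp only [Function.mem_support] at hm ⊢
    exact fun h => hm (by rw [h, mul_zero]))

/-- For the formal solution `a ∈ 1 + z^{-(r+1)}ℂ[[z^{-(r+1)}]]` of `S_z^r a = (-z)^r a`,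
the series `S_z^n a` has leading term `(-1)^n z^n` and all lower-order terms are
supported on exponents `≡ n mod (r+1)`.  In `t = z⁻¹` coordinates: the coefficient
at `t^{-n}` is `(-1)^n` and all nonzero coefficients sit at `m ≥ -n` with
`-m ≡ n mod (r+1)`. -/
theorem Sz_iterate_leading (r : ℕ) (hr : 2 ≤ r) (a : LaurentSeries ℂ)
    (ha0 : a.coeff 0 = 1)
    (hsupp : ∀ m : ℤ, a.coeff m ≠ 0 → ∃ k : ℕ, m = ((r : ℤ) + 1) * k)
    (hode : (Sop r)^[r] a = ((-1 : ℂ) ^ r) • (HahnSeries.single (-(r : ℤ)) 1 * a))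
    (n : ℕ) :
    ((Sop r)^[n] a).coeff (-(n : ℤ)) = (-1) ^ n ∧
    ∀ m : ℤ, ((Sop r)^[n] a).coeff m ≠ 0 →
      -(n : ℤ) ≤ m ∧ (-m : ℤ) ≡ (n : ℤ) [ZMOD ((r : ℤ) + 1)] := by
  induction n with
  | zero =>
    refine ⟨by simpa using ha0, fun m hm => ?_⟩
    simp only [Function.iterate_zero, id_eq] at hm
    obtain ⟨k, hk⟩ := hsupp m hm
    refine ⟨by simp only [Nat.cast_zero, neg_zero, hk]; positivity, ?_⟩
    have h0 : ((0 : ℕ) : ℤ) = 0 := rfl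
    rw [h0]
    exact Int.modEq_zero_iff_dvd.mpr ⟨-k, by rw [hk]; ring⟩
  | succ n ih =>
    obtain ⟨h1, h2⟩ := ih
    rw [Function.iterate_succ_apply']
    set f := (Sop r)^[n] a with hf
    have hcoeff : ∀ m : ℤ, (Sop r f).coeff m
        = ((r + 1 : ℂ) / 2 - m) * f.coeff (m - r) - f.coeff (m + 1) := fun m => rfl
    constructor
    · rw [hcoeff]
      have hz : f.coeff (-((n + 1 : ℕ) : ℤ) - r) = 0 := by
        by_contra h
        have := (h2 _ h).1
        push_cast at this; omega
      rw [hz, mul_zero, zero_sub]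
      have he : (-((n + 1 : ℕ) : ℤ)) + 1 = -(n : ℤ) := by push_cast; ring
      rw [he, h1]
      push_cast; ring
    · intro m hm
      rw [hcoeff] at hm
      by_cases hA : f.coeff (m - r) = 0
      · have hB : f.coeff (m + 1) ≠ 0 := by
          intro h; exact hm (by rw [hA, h]; ring)
        obtain ⟨hle, hmod⟩ := h2 _ hB
        refine ⟨by push_cast at hle ⊢; omega, ?_⟩
        have h3 := hmod.add_right 1
        have he : (-(m + 1) : ℤ) + 1 = -m := by ring
        rw [he] at h3
        have he2 : ((n : ℤ) + 1) = ((n + 1 : ℕ) : ℤ) := by push_cast; ring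
        rwa [he2] at h3
      · obtain ⟨hle, hmod⟩ := h2 _ hA
        refine ⟨by push_cast at hle ⊢; omega, ?_⟩
        have h3 := hmod.sub_right (r : ℤ)
        have he : (-(m - r) : ℤ) - r = -m := by ring
        rw [he] at h3
        have h4 : ((n : ℤ) - r) ≡ ((n + 1 : ℕ) : ℤ) [ZMOD ((r : ℤ) + 1)] :=
          Int.ModEq.symm (Int.modEq_iff_dvd.mpr ⟨-1, by push_cast; ring⟩)
        exact h3.trans h4
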